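/- Let A be a real n×n matrix, B a real n×m matrix, and K a real m×n matrix. If there exist symmetric matrices P ⪰ 0, Q ⪰ 0 (n×n) and R ≻ 0 (m×m) satisfying the Kalman constraint equations Q + Aᵀ P (A + B K) − P = 0 and R K + Bᵀ P (A + B K) = 0, then there exist symmetric matrices P' ⪰ 0, Q' ⪰ 0 and R' with R' − I ⪰ 0 satisfying the same equations with the same K. That is, the open constraint R ≻ 0 in the Kalman feasibility problem can be replaced by the closed constraint R ⪰ I without changing the set of feasible gain matrices K. -/

import Mathlib

open Matrix

lemma posSemidef_smul_aux {k : ℕ} {P : Matrix (Fin k) (Fin k) ℝ} (hP : P.PosSemidef)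
    {c : ℝ} (hc : 0 ≤ c) : (c • P).PosSemidef := by
  refine ⟨?_, fun x => ?_⟩
  · unfold Matrix.IsHermitian
    rw [conjTranspose_smul, hP.1]
    simp
  · exact (hP.smul hc).2 x

lemma smul_sub_one_posSemidef_aux {k : ℕ} (hk : 0 < k) {R : Matrix (Fin k) (Fin k) ℝ}
    (hR : R.PosDef) : ∃ c : ℝ, 0 < c ∧ (c • R - 1).PosSemidef := by
  have : Nonempty (Fin k) := ⟨⟨0, hk⟩⟩
  set ev := hR.1.eigenvalues with hev
  set lmin := Finset.univ.inf' Finset.univ_nonempty ev with hlm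
  have hminle : ∀ i, lmin ≤ ev i := fun i => Finset.inf'_le _ (Finset.mem_univ i)
  have hlmin : 0 < lmin := by
    rw [hlm, Finset.lt_inf'_iff]
    exact fun i _ => hR.eigenvalues_pos i
  refine ⟨lmin⁻¹, inv_pos.mpr hlmin, ?_⟩
  set U : Matrix (Fin k) (Fin k) ℝ := (hR.1.eigenvectorUnitary : Matrix (Fin k) (Fin k) ℝ)
    with hUdef
  have hU : U * star U = 1 := Matrix.mem_unitaryGroup_iff.mp hR.1.eigenvectorUnitary.2
  have key : lmin⁻¹ • R - 1 = U * diagonal (fun i => lmin⁻¹ * ev i - 1) * star U := by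
    have hdiag : diagonal (fun i => lmin⁻¹ * ev i - 1) =
        lmin⁻¹ • diagonal (RCLike.ofReal ∘ ev) - 1 := by
      ext i j
      by_cases hij : i = j <;> simp [diagonal, hij, smul_eq_mul]
    rw [hdiag]
    simp only [Matrix.mul_sub, Matrix.sub_mul, Matrix.mul_one, Matrix.one_mul,
      Matrix.mul_smul, Matrix.smul_mul, hU]
    conv_lhs => rw [hR.1.spectral_theorem]
    rfl
  rw [key]
  have hd : (diagonal (fun i => lmin⁻¹ * ev i - 1)).PosSemidef := by
    refine posSemidef_diagonal_iff.mpr fun i => ?_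
    have : lmin⁻¹ * lmin ≤ lmin⁻¹ * ev i :=
      mul_le_mul_of_nonneg_left (hminle i) (le_of_lt (inv_pos.mpr hlmin))
    rw [inv_mul_cancel₀ (ne_of_gt hlmin)] at this
    linarith
  have := hd.mul_mul_conjTranspose_same U
  simpa [Matrix.star_eq_conjTranspose] using this

/-- The open constraint `R ≻ 0` in the Kalman feasibility problem can be replaced
by the closed constraint `R ⪰ I` without changing the set of feasible gains `K`. -/
theorem kalman_open_to_closed {n m : ℕ} (hn : 0 < n) (hm : 0 < m)
    (A : Matrix (Fin n) (Fin n) ℝ) (B : Matrix (Fin n) (Fin m) ℝ)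
    (K : Matrix (Fin m) (Fin n) ℝ)
    (h : ∃ (P Q : Matrix (Fin n) (Fin n) ℝ) (R : Matrix (Fin m) (Fin m) ℝ),
      P.PosSemidef ∧ Q.PosSemidef ∧ R.PosDef ∧
      Q + Aᵀ * P * (A + B * K) - P = 0 ∧
      R * K + Bᵀ * P * (A + B * K) = 0) :
    ∃ (P' Q' : Matrix (Fin n) (Fin n) ℝ) (R' : Matrix (Fin m) (Fin m) ℝ),
      P'.PosSemidef ∧ Q'.PosSemidef ∧ (R' - 1).PosSemidef ∧
      Q' + Aᵀ * P' * (A + B * K) - P' = 0 ∧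
      R' * K + Bᵀ * P' * (A + B * K) = 0 := by
  obtain ⟨P, Q, R, hP, hQ, hR, h1, h2⟩ := h
  obtain ⟨c, hc, hcR⟩ := smul_sub_one_posSemidef_aux hm hR
  refine ⟨c • P, c • Q, c • R, posSemidef_smul_aux hP hc.le,
    posSemidef_smul_aux hQ hc.le, hcR, ?_, ?_⟩
  · have : c • Q + Aᵀ * (c • P) * (A + B * K) - c • P
        = c • (Q + Aᵀ * P * (A + B * K) - P) := by
      simp only [Matrix.mul_smul, Matrix.smul_mul, smul_sub, smul_add]
    rw [this, h1, smul_zero]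
  · have : (c • R) * K + Bᵀ * (c • P) * (A + B * K)
        = c • (R * K + Bᵀ * P * (A + B * K)) := by
      simp only [Matrix.mul_smul, Matrix.smul_mul, smul_add]
    rw [this, h2, smul_zero]
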